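/- arXiv:2307.03834 — 2 statements merged into one kernel-verified Lean document; each statement's English description precedes it below -/
import Mathlib

section
/- Let Γ be an infinite discrete subgroup of PSL(3,ℂ) such that the maximum number of lines in general position contained in the Kulkarni limit set Λ(Γ) equals 2. Then Γ has a global fixed point: if ℓ₁ ≠ ℓ₂ are any two distinct lines contained in Λ(Γ), the intersection point ℓ₁ ∩ ℓ₂ is fixed by every element of Γ. -/
set_option maxHeartbeats 1000000
set_option synthInstance.maxHeartbeats 200000

noncomputable section

open Matrix Filter Topology Set Pointwise

/-- `SL(n,ℂ)`. -/
abbrev SL (n : ℕ) := Matrix.SpecialLinearGroup (Fin n) ℂ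

/-- `PSL(n,ℂ) = SL(n,ℂ)/center`. -/
abbrev PSL (n : ℕ) := Matrix.ProjectiveSpecialLinearGroup (Fin n) ℂ

/-- The complex projective space of dimension `n - 1`, as the projectivization of `ℂⁿ`. -/
abbrev Proj (n : ℕ) : Type := Projectivization ℂ (Fin n → ℂ)

/-- The topology on `SL(n,ℂ)` induced from the space of matrices. -/
instance (n : ℕ) : TopologicalSpace (SL n) :=
  inferInstanceAs (TopologicalSpace { A : Matrix (Fin n) (Fin n) ℂ // A.det = 1 })

/-- The quotient topology on projective space. -/
instance (n : ℕ) : TopologicalSpace (Proj n) :=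
  show TopologicalSpace (Quotient (projectivizationSetoid ℂ (Fin n → ℂ))) from
    inferInstance

namespace PSLAct

/-- The action of an element of `SL(n,ℂ)` on projective space. -/
def actP {n : ℕ} (g : SL n) (x : Proj n) : Proj n :=
  Projectivization.map
    ((Matrix.SpecialLinearGroup.toLin' g : (Fin n → ℂ) ≃ₗ[ℂ] (Fin n → ℂ)) :
      (Fin n → ℂ) →ₗ[ℂ] (Fin n → ℂ))
    (Matrix.SpecialLinearGroup.toLin' g).injective x

lemma actP_mk {n : ℕ} (g : SL n) (v : Fin n → ℂ) (hv : v ≠ 0) :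
    actP g (Projectivization.mk ℂ v hv) =
      Projectivization.mk ℂ (Matrix.SpecialLinearGroup.toLin' g v)
        ((Matrix.SpecialLinearGroup.toLin' g).map_ne_zero_iff.mpr hv) := by
  rfl

lemma actP_mul {n : ℕ} (g h : SL n) (x : Proj n) : actP g (actP h x) = actP (g * h) x := by
  induction' x using Projectivization.ind with v hv
  rw [actP_mk, actP_mk, actP_mk]
  rw [Projectivization.mk_eq_mk_iff']
  refine ⟨1, ?_⟩
  rw [one_smul, _root_.map_mul]
  rfl

lemma actP_one {n : ℕ} (x : Proj n) : actP 1 x = x := by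
  induction' x using Projectivization.ind with v hv
  rw [actP_mk]
  rw [Projectivization.mk_eq_mk_iff']
  exact ⟨1, by simp⟩

/-- The action of `SL(n,ℂ)` on projective space, as a homomorphism into permutations. -/
def actSL {n : ℕ} : SL n →* Equiv.Perm (Proj n) where
  toFun g :=
    { toFun := actP g
      invFun := actP g⁻¹
      left_inv := fun x => by rw [actP_mul, inv_mul_cancel, actP_one]
      right_inv := fun x => by rw [actP_mul, mul_inv_cancel, actP_one] }
  map_one' := Equiv.ext fun x => actP_one x
  map_mul' g h := Equiv.ext fun x => (actP_mul g h x).symm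

lemma actSL_center {n : ℕ} (g : SL n) (hg : g ∈ Subgroup.center (SL n)) : actSL g = 1 := by
  obtain ⟨r, hr1, hr⟩ := Matrix.SpecialLinearGroup.mem_center_iff.mp hg
  ext x
  induction' x using Projectivization.ind with v hv
  show actP g (Projectivization.mk ℂ v hv) = Projectivization.mk ℂ v hv
  rw [actP_mk, Projectivization.mk_eq_mk_iff']
  refine ⟨r, ?_⟩
  have : Matrix.SpecialLinearGroup.toLin' g v
      = Matrix.mulVec (g : Matrix (Fin n) (Fin n) ℂ) v := by
    rw [Matrix.SpecialLinearGroup.toLin'_apply, Matrix.toLin'_apply]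
  rw [this, ← hr]
  funext i
  simp [Matrix.scalar_apply, Matrix.mulVec_diagonal]

/-- The action of `PSL(n,ℂ)` on projective space. -/
def act {n : ℕ} : PSL n →* Equiv.Perm (Proj n) :=
  QuotientGroup.lift (Subgroup.center (SL n)) actSL (fun g hg => actSL_center g hg)

instance {n : ℕ} : MulAction (PSL n) (Proj n) := MulAction.compHom (Proj n) act

end PSLAct

/-- A subset of projective space is a (complex projective) line if it is the image of a
2-dimensional complex linear subspace of `ℂⁿ`. -/
def IsLine {n : ℕ} (l : Set (Proj n)) : Prop :=
  ∃ W : Submodule ℂ (Fin n → ℂ), Module.finrank ℂ W = 2 ∧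
    l = {x : Proj n | x.submodule ≤ W}

/-- The orbit of a point under a set of transformations. -/
def setOrbit {n : ℕ} (S : Set (PSL n)) (z : Proj n) : Set (Proj n) :=
  {w : Proj n | ∃ γ ∈ S, γ • z = w}

/-- `L0`: the closure of the set of points with infinite stabilizer. -/
def L0 {n : ℕ} (S : Set (PSL n)) : Set (Proj n) :=
  closure {x : Proj n | {γ : PSL n | γ ∈ S ∧ γ • x = x}.Infinite}

/-- `L1`: the closure of the set of cluster points of orbits of points outside `L0`. -/
def L1 {n : ℕ} (S : Set (PSL n)) : Set (Proj n) :=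
  closure {y : Proj n | ∃ z : Proj n, z ∉ L0 S ∧ AccPt y (Filter.principal (setOrbit S z))}

/-- `L2`: the closure of the union, over compact subsets `K` of the complement of
`L0 ∪ L1`, of the set of points `x` such that every neighborhood of `x` meets `γ • K`
for infinitely many `γ ∈ S`. -/
def L2 {n : ℕ} (S : Set (PSL n)) : Set (Proj n) :=
  closure (⋃ K ∈ {K : Set (Proj n) | IsCompact K ∧ K ⊆ (L0 S ∪ L1 S)ᶜ},
    {x : Proj n | ∀ U ∈ nhds x, {γ : PSL n | γ ∈ S ∧ (U ∩ γ • K).Nonempty}.Infinite})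

/-- The Kulkarni limit set. -/
def kulkarniLimitSet {n : ℕ} (S : Set (PSL n)) : Set (Proj n) := L0 S ∪ L1 S ∪ L2 S

/-- The collection of lines contained in the Kulkarni limit set. -/
def linesIn {n : ℕ} (S : Set (PSL n)) : Set (Set (Proj n)) :=
  {l | IsLine l ∧ l ⊆ kulkarniLimitSet S}

/-- A family of lines is in general position if no three distinct members have a
common point. -/
def InGenPos {n : ℕ} (F : Set (Set (Proj n))) : Prop :=
  ∀ l₁ ∈ F, ∀ l₂ ∈ F, ∀ l₃ ∈ F, l₁ ≠ l₂ → l₁ ≠ l₃ → l₂ ≠ l₃ → l₁ ∩ l₂ ∩ l₃ = ∅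

/-- The set of `k : ℕ` such that the Kulkarni limit set contains `k` distinct lines in
general position. -/
def genPosCounts {n : ℕ} (S : Set (PSL n)) : Set ℕ :=
  {k : ℕ | ∃ F : Finset (Set (Proj n)), F.card = k ∧ ↑F ⊆ linesIn S ∧ InGenPos (↑F : Set (Set (Proj n)))}

/-- The maximum number of lines in general position contained in the Kulkarni limit
set is exactly `k`. -/
def maxGenPos {n : ℕ} (S : Set (PSL n)) (k : ℕ) : Prop := IsGreatest (genPosCounts S) k

/-- `γ ∈ PSL(n,ℂ)` is the class of the matrix `M` (after rescaling to determinant one). -/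
def Represents {n : ℕ} (γ : PSL n) (M : Matrix (Fin n) (Fin n) ℂ) : Prop :=
  ∃ g : SL n, QuotientGroup.mk g = γ ∧
    ∃ c : ℂ, c ≠ 0 ∧ (g : Matrix (Fin n) (Fin n) ℂ) = c • M

/-- The line through two points of projective space. -/
def lineThrough {n : ℕ} (p q : Proj n) : Set (Proj n) :=
  {x : Proj n | x.submodule ≤ p.submodule ⊔ q.submodule}

/-- The standard basis points of projective space. -/
def stdPt {n : ℕ} [NeZero n] (i : Fin n) : Proj n :=
  Projectivization.mk ℂ (Pi.single i 1)
    (fun h => one_ne_zero (α := ℂ) (by simpa using congrFun h i))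

/-- A group is virtually solvable if it has a solvable subgroup of finite index. -/
def VirtuallySolvable (G : Type*) [Group G] : Prop :=
  ∃ H : Subgroup G, H.FiniteIndex ∧ IsSolvable H

namespace PSLAct

example (n : ℕ) (γ : PSL n) (x : Proj n) : γ • x = act γ x := rfl
example (n : ℕ) (g : SL n) (x : Proj n) : (QuotientGroup.mk g : PSL n) • x = actP g x := rfl
example (n : ℕ) (γ : PSL n) (s : Set (Proj n)) : γ • s = (act γ) '' s := rfl

lemma continuous_actP {n : ℕ} (g : SL n) : Continuous (actP g) := by
  have hq : IsQuotientMap (Quotient.mk'' : {v : Fin n → ℂ // v ≠ 0} → Proj n) :=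
    isQuotientMap_quotient_mk'
  refine hq.continuous_iff.mpr ?_
  have hc : Continuous fun v : {v : Fin n → ℂ // v ≠ 0} =>
      (Matrix.SpecialLinearGroup.toLin' g : (Fin n → ℂ) →ₗ[ℂ] (Fin n → ℂ)) v.1 :=
    (LinearMap.continuous_of_finiteDimensional _).comp continuous_subtype_val
  exact continuous_quotient_mk'.comp (hc.subtype_mk _)

lemma continuous_act {n : ℕ} (γ : PSL n) : Continuous (act γ) := by
  obtain ⟨g⟩ := γ
  exact continuous_actP g

end PSLAct
namespace PSLAct

/-- The action of `γ : PSL n` as a homeomorphism. -/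
def homeoOf {n : ℕ} (γ : PSL n) : Proj n ≃ₜ Proj n where
  toEquiv := act γ
  continuous_toFun := continuous_act γ
  continuous_invFun := by
    have h : ((act γ).symm : Proj n → Proj n) = (act γ⁻¹ : Equiv.Perm (Proj n)) := by
      have h2 : act (n := n) γ⁻¹ = (act γ)⁻¹ := map_inv act γ
      rw [h2]; rfl
    show Continuous ((act γ).symm : Proj n → Proj n)
    rw [h]
    exact continuous_act γ⁻¹

lemma homeoOf_apply {n : ℕ} (γ : PSL n) (x : Proj n) : homeoOf γ x = γ • x := rfl

lemma smul_set_eq_image {n : ℕ} (γ : PSL n) (s : Set (Proj n)) :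
    γ • s = homeoOf γ '' s := rfl

/-- If `γ • s ⊆ s` for all `γ` in a subgroup, then `γ • s = s`. -/
lemma smul_eq_of_smul_subset {n : ℕ} (Γ : Subgroup (PSL n)) {s : Set (Proj n)}
    (h : ∀ γ ∈ Γ, γ • s ⊆ s) : ∀ γ ∈ Γ, γ • s = s := by
  intro γ hγ
  refine subset_antisymm (h γ hγ) ?_
  have h2 := h γ⁻¹ (inv_mem hγ)
  have := Set.smul_set_mono (a := γ) h2
  rwa [smul_inv_smul] at this

lemma smul_closure {n : ℕ} (γ : PSL n) (s : Set (Proj n)) :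
    γ • closure s = closure (γ • s) := by
  rw [smul_set_eq_image, smul_set_eq_image, Homeomorph.image_closure]

end PSLAct
namespace PSLAct

lemma smul_L0_subset {n : ℕ} (Γ : Subgroup (PSL n)) {γ : PSL n} (hγ : γ ∈ Γ) :
    γ • L0 (Γ : Set (PSL n)) ⊆ L0 (Γ : Set (PSL n)) := by
  unfold L0
  rw [smul_closure]
  refine closure_mono ?_
  rintro _ ⟨x, hx, rfl⟩
  have hinj : Function.Injective (fun δ : PSL n => γ * δ * γ⁻¹) := by
    intro a b hab
    simpa using mul_left_cancel (mul_right_cancel hab)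
  refine ((hx.image (hinj.injOn)).mono ?_)
  rintro _ ⟨δ, ⟨hδΓ, hδx⟩, rfl⟩
  refine ⟨mul_mem (mul_mem hγ hδΓ) (inv_mem hγ), ?_⟩
  show (γ * δ * γ⁻¹) • γ • x = γ • x
  rw [mul_smul, mul_smul, inv_smul_smul, hδx]

lemma smul_L0 {n : ℕ} (Γ : Subgroup (PSL n)) {γ : PSL n} (hγ : γ ∈ Γ) :
    γ • L0 (Γ : Set (PSL n)) = L0 (Γ : Set (PSL n)) :=
  smul_eq_of_smul_subset Γ (fun _ h => smul_L0_subset Γ h) γ hγ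

lemma smul_setOrbit {n : ℕ} (Γ : Subgroup (PSL n)) {γ : PSL n} (hγ : γ ∈ Γ) (z : Proj n) :
    γ • setOrbit (Γ : Set (PSL n)) z = setOrbit (Γ : Set (PSL n)) z := by
  refine smul_eq_of_smul_subset Γ ?_ γ hγ
  intro γ' hγ'
  rintro _ ⟨w, ⟨δ, hδ, rfl⟩, rfl⟩
  exact ⟨γ' * δ, mul_mem hγ' hδ, mul_smul γ' δ z⟩

lemma smul_L1_subset {n : ℕ} (Γ : Subgroup (PSL n)) {γ : PSL n} (hγ : γ ∈ Γ) :
    γ • L1 (Γ : Set (PSL n)) ⊆ L1 (Γ : Set (PSL n)) := by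
  unfold L1
  rw [smul_closure]
  refine closure_mono ?_
  rintro _ ⟨y, ⟨z, hz, hacc⟩, rfl⟩
  refine ⟨z, hz, ?_⟩
  have hmap : Filter.map (homeoOf γ) (nhdsWithin y {y}ᶜ ⊓
      Filter.principal (setOrbit (Γ : Set (PSL n)) z)) =
      nhdsWithin (γ • y) {γ • y}ᶜ ⊓ Filter.principal (setOrbit (Γ : Set (PSL n)) z) := by
    rw [Filter.map_inf (homeoOf γ).injective, Filter.map_principal,
      (homeoOf γ).map_punctured_nhds_eq y]
    rw [← smul_set_eq_image, smul_setOrbit Γ hγ]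
    rfl
  have hnb : (nhdsWithin y {y}ᶜ ⊓ Filter.principal (setOrbit (Γ : Set (PSL n)) z)).NeBot := hacc
  have h2 := Filter.NeBot.map hnb (homeoOf γ)
  rw [hmap] at h2
  exact h2

lemma smul_L1 {n : ℕ} (Γ : Subgroup (PSL n)) {γ : PSL n} (hγ : γ ∈ Γ) :
    γ • L1 (Γ : Set (PSL n)) = L1 (Γ : Set (PSL n)) :=
  smul_eq_of_smul_subset Γ (fun _ h => smul_L1_subset Γ h) γ hγ

end PSLAct
namespace PSLAct

lemma smul_L2_subset {n : ℕ} (Γ : Subgroup (PSL n)) {γ : PSL n} (hγ : γ ∈ Γ) :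
    γ • L2 (Γ : Set (PSL n)) ⊆ L2 (Γ : Set (PSL n)) := by
  unfold L2
  rw [smul_closure]
  refine closure_mono ?_
  rw [Set.smul_set_iUnion₂]
  refine Set.iUnion₂_subset ?_
  intro K hK
  refine Set.subset_iUnion₂_of_subset K hK ?_
  rintro _ ⟨x, hx, rfl⟩
  intro U hU
  have hU' : γ⁻¹ • U ∈ nhds x := by
    have : U ∈ Filter.map (homeoOf γ) (nhds x) := by
      rw [(homeoOf γ).map_nhds_eq x]; exact hU
    have hpre : (homeoOf γ) ⁻¹' U ∈ nhds x := this
    have : (homeoOf γ) ⁻¹' U = γ⁻¹ • U := by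
      ext w
      simp only [Set.mem_preimage, homeoOf_apply, Set.mem_smul_set_iff_inv_smul_mem,
        inv_inv]
    rwa [this] at hpre
  have hinf := hx (γ⁻¹ • U) hU'
  have hinj : Function.Injective (fun δ : PSL n => γ * δ) := fun a b hab => by
    simpa using mul_left_cancel hab
  refine (hinf.image hinj.injOn).mono ?_
  rintro _ ⟨δ, ⟨hδΓ, w, hw⟩, rfl⟩
  refine ⟨mul_mem hγ hδΓ, γ • w, ?_, ?_⟩
  · have := hw.1
    rwa [Set.mem_smul_set_iff_inv_smul_mem, inv_inv] at this
  · have := Set.smul_mem_smul_set (a := γ) hw.2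
    rwa [smul_smul] at this

lemma smul_L2 {n : ℕ} (Γ : Subgroup (PSL n)) {γ : PSL n} (hγ : γ ∈ Γ) :
    γ • L2 (Γ : Set (PSL n)) = L2 (Γ : Set (PSL n)) :=
  smul_eq_of_smul_subset Γ (fun _ h => smul_L2_subset Γ h) γ hγ

lemma smul_kulkarni {n : ℕ} (Γ : Subgroup (PSL n)) {γ : PSL n} (hγ : γ ∈ Γ) :
    γ • kulkarniLimitSet (Γ : Set (PSL n)) = kulkarniLimitSet (Γ : Set (PSL n)) := by
  unfold kulkarniLimitSet
  rw [Set.smul_set_union, Set.smul_set_union, smul_L0 Γ hγ, smul_L1 Γ hγ, smul_L2 Γ hγ]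

end PSLAct
namespace PSLAct

lemma submodule_actP {n : ℕ} (g : SL n) (x : Proj n) :
    (actP g x).submodule = x.submodule.map
      ((Matrix.SpecialLinearGroup.toLin' g : (Fin n → ℂ) ≃ₗ[ℂ] (Fin n → ℂ)) :
        (Fin n → ℂ) →ₗ[ℂ] (Fin n → ℂ)) := by
  induction' x using Projectivization.ind with v hv
  rw [actP_mk, Projectivization.submodule_mk, Projectivization.submodule_mk,
    Submodule.map_span, Set.image_singleton]
  rfl

lemma actP_inv_actP {n : ℕ} (g : SL n) (x : Proj n) : actP g⁻¹ (actP g x) = x := by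
  rw [actP_mul, inv_mul_cancel, actP_one]

lemma image_actP_line {n : ℕ} (g : SL n) (W : Submodule ℂ (Fin n → ℂ)) :
    actP g '' {x : Proj n | x.submodule ≤ W} =
      {x : Proj n | x.submodule ≤ W.map
        ((Matrix.SpecialLinearGroup.toLin' g : (Fin n → ℂ) ≃ₗ[ℂ] (Fin n → ℂ)) :
          (Fin n → ℂ) →ₗ[ℂ] (Fin n → ℂ))} := by
  have hinv : ∀ v : Fin n → ℂ,
      Matrix.SpecialLinearGroup.toLin' g⁻¹ (Matrix.SpecialLinearGroup.toLin' g v) = v := by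
    intro v
    have : Matrix.SpecialLinearGroup.toLin' g⁻¹ * Matrix.SpecialLinearGroup.toLin' g
        = 1 := by rw [← _root_.map_mul, inv_mul_cancel, _root_.map_one]
    calc Matrix.SpecialLinearGroup.toLin' g⁻¹ (Matrix.SpecialLinearGroup.toLin' g v)
        = (Matrix.SpecialLinearGroup.toLin' g⁻¹ * Matrix.SpecialLinearGroup.toLin' g) v := rfl
      _ = v := by rw [this]; rfl
  ext x
  constructor
  · rintro ⟨y, hy, rfl⟩
    rw [Set.mem_setOf_eq, submodule_actP]
    exact Submodule.map_mono hy
  · intro hx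
    refine ⟨actP g⁻¹ x, ?_, by rw [actP_mul, mul_inv_cancel, actP_one]⟩
    rw [Set.mem_setOf_eq, submodule_actP]
    refine le_trans (Submodule.map_mono hx) ?_
    intro w hw
    obtain ⟨u, hu, rfl⟩ := hw
    obtain ⟨v, hv, rfl⟩ := hu
    simpa only [LinearEquiv.coe_coe, hinv v, SetLike.mem_coe] using hv

lemma isLine_smul {n : ℕ} (γ : PSL n) {l : Set (Proj n)} (h : IsLine l) :
    IsLine (γ • l) := by
  obtain ⟨g⟩ := γ
  obtain ⟨W, hW2, rfl⟩ := h
  show IsLine ((QuotientGroup.mk g : PSL n) • {x : Proj n | x.submodule ≤ W})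
  have himg : (QuotientGroup.mk g : PSL n) • {x : Proj n | x.submodule ≤ W}
      = actP g '' {x : Proj n | x.submodule ≤ W} := rfl
  rw [himg, image_actP_line]
  refine ⟨W.map _, ?_, rfl⟩
  rw [LinearEquiv.finrank_map_eq]
  exact hW2

end PSLAct
namespace PSLAct

lemma inter_unique {l₁ l₂ : Set (Proj 3)} (h₁ : IsLine l₁) (h₂ : IsLine l₂)
    (hne : l₁ ≠ l₂) : ∀ p ∈ l₁ ∩ l₂, ∀ q ∈ l₁ ∩ l₂, p = q := by
  obtain ⟨W₁, hW₁, rfl⟩ := h₁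
  obtain ⟨W₂, hW₂, rfl⟩ := h₂
  have hWne : W₁ ≠ W₂ := fun h => hne (by rw [h])
  have htot : Module.finrank ℂ (Fin 3 → ℂ) = 3 := by simp
  have hsup_le : Module.finrank ℂ ↥(W₁ ⊔ W₂) ≤ 3 := le_trans (Submodule.finrank_le _) (le_of_eq htot)
  have hle1 : Module.finrank ℂ ↥W₁ ≤ Module.finrank ℂ ↥(W₁ ⊔ W₂) :=
    Submodule.finrank_mono le_sup_left
  have hsup_ne : Module.finrank ℂ ↥(W₁ ⊔ W₂) ≠ 2 := by
    intro h
    have e1 : W₁ = W₁ ⊔ W₂ :=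
      Submodule.eq_of_le_of_finrank_le le_sup_left (by omega)
    have e2 : W₂ = W₁ ⊔ W₂ :=
      Submodule.eq_of_le_of_finrank_le le_sup_right (by omega)
    exact hWne (e1.trans e2.symm)
  have hsum := Submodule.finrank_sup_add_finrank_inf_eq W₁ W₂
  have hinf : Module.finrank ℂ ↥(W₁ ⊓ W₂) = 1 := by omega
  intro p hp q hq
  have hple : p.submodule ≤ W₁ ⊓ W₂ := le_inf hp.1 hp.2
  have hqle : q.submodule ≤ W₁ ⊓ W₂ := le_inf hq.1 hq.2
  have hpeq : p.submodule = W₁ ⊓ W₂ :=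
    Submodule.eq_of_le_of_finrank_le hple (by rw [hinf, p.finrank_submodule])
  have hqeq : q.submodule = W₁ ⊓ W₂ :=
    Submodule.eq_of_le_of_finrank_le hqle (by rw [hinf, q.finrank_submodule])
  exact Projectivization.submodule_injective (hpeq.trans hqeq.symm)

end PSLAct

open PSLAct

/-- If the maximal number of lines in general position in the Kulkarni
limit set of an infinite discrete subgroup `Γ` of `PSL(3,ℂ)` is two, then the
intersection point of any two distinct lines of the limit set is a global fixed point
of `Γ`. -/
theorem two_lines_global_fixed_point (Γ : Subgroup (PSL 3))
    (hinf : (Γ : Set (PSL 3)).Infinite) (hdisc : DiscreteTopology Γ)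
    (hmax : maxGenPos (Γ : Set (PSL 3)) 2) :
    ∀ l₁ ∈ linesIn (Γ : Set (PSL 3)), ∀ l₂ ∈ linesIn (Γ : Set (PSL 3)), l₁ ≠ l₂ →
      ∀ p ∈ l₁ ∩ l₂, ∀ γ ∈ Γ, γ • p = p := by
  
  classical
  intro l₁ hl₁ l₂ hl₂ hne p hp γ hγ
  have h3 : 3 ∉ genPosCounts (Γ : Set (PSL 3)) := by
    intro h
    have := hmax.2 h
    omega
  have concurrent : ∀ l₃ ∈ linesIn (Γ : Set (PSL 3)), l₃ ≠ l₁ → l₃ ≠ l₂ → p ∈ l₃ := by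
    intro l₃ hl₃ h31 h32
    have hsub : (↑({l₁, l₂, l₃} : Finset (Set (Proj 3))) : Set (Set (Proj 3)))
        ⊆ linesIn (Γ : Set (PSL 3)) := by
      intro x hx
      simp only [Finset.coe_insert, Finset.coe_singleton, Set.mem_insert_iff,
        Set.mem_singleton_iff] at hx
      rcases hx with rfl | rfl | rfl <;> assumption
    have hngen : ¬ InGenPos (↑({l₁, l₂, l₃} : Finset (Set (Proj 3))) : Set (Set (Proj 3))) := by
      intro hgen
      exact h3 ⟨{l₁, l₂, l₃},
        Finset.card_eq_three.mpr ⟨l₁, l₂, l₃, hne, Ne.symm h31, Ne.symm h32, rfl⟩, hsub, hgen⟩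
    unfold InGenPos at hngen
    push_neg at hngen
    obtain ⟨a, ha, b, hb, c, hc, hab, hac, hbc, habc⟩ := hngen
    simp only [Finset.coe_insert, Finset.coe_singleton, Set.mem_insert_iff,
      Set.mem_singleton_iff] at ha hb hc
    obtain ⟨q, hq⟩ := habc
    simp only [Set.mem_inter_iff] at hq
    have hq3 : q ∈ l₁ ∧ q ∈ l₂ ∧ q ∈ l₃ := by
      rcases ha with rfl | rfl | rfl <;> rcases hb with rfl | rfl | rfl <;>
        rcases hc with rfl | rfl | rfl <;> tauto
    have hqp : q = p := inter_unique hl₁.1 hl₂.1 hne q ⟨hq3.1, hq3.2.1⟩ p hp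
    exact hqp ▸ hq3.2.2
  have hl₁' : γ • l₁ ∈ linesIn (Γ : Set (PSL 3)) := by
    refine ⟨isLine_smul γ hl₁.1, ?_⟩
    calc γ • l₁ ⊆ γ • kulkarniLimitSet (Γ : Set (PSL 3)) := Set.smul_set_mono hl₁.2
      _ = kulkarniLimitSet (Γ : Set (PSL 3)) := smul_kulkarni Γ hγ
  have hl₂' : γ • l₂ ∈ linesIn (Γ : Set (PSL 3)) := by
    refine ⟨isLine_smul γ hl₂.1, ?_⟩
    calc γ • l₂ ⊆ γ • kulkarniLimitSet (Γ : Set (PSL 3)) := Set.smul_set_mono hl₂.2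
      _ = kulkarniLimitSet (Γ : Set (PSL 3)) := smul_kulkarni Γ hγ
  have hp1 : p ∈ γ • l₁ := by
    by_cases h : γ • l₁ = l₁
    · rw [h]; exact hp.1
    by_cases h' : γ • l₁ = l₂
    · rw [h']; exact hp.2
    exact concurrent _ hl₁' h h'
  have hp2 : p ∈ γ • l₂ := by
    by_cases h : γ • l₂ = l₁
    · rw [h]; exact hp.1
    by_cases h' : γ • l₂ = l₂
    · rw [h']; exact hp.2
    exact concurrent _ hl₂' h h'
  have hne' : γ • l₁ ≠ γ • l₂ := by
    intro h
    apply hne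
    have h2 := congrArg (fun s => γ⁻¹ • s) h
    simpa only [inv_smul_smul] using h2
  have hγp : γ • p ∈ (γ • l₁) ∩ (γ • l₂) :=
    ⟨Set.smul_mem_smul_set hp.1, Set.smul_mem_smul_set hp.2⟩
  exact inter_unique (isLine_smul γ hl₁.1) (isLine_smul γ hl₂.1) hne'
    (γ • p) hγp p ⟨hp1, hp2⟩
end
end

section
/- Let Γ be a discrete subgroup of PSL(3,ℂ) such that every element of Γ fixes the point [e₁] = [1:0:0], leaves invariant the line ℓ = {[0:z:w]}, and such that the maximum number of lines in general position contained in the Kulkarni limit set Λ(Γ) equals 3. Let Π : Γ → PSL(2,ℂ) be the homomorphism given by restricting the action of Γ to ℓ, identified with ℙ¹ℂ via [0:z:w] ↦ [z:w]. If the image Π(Γ) is not virtually solvable, then Π(Γ) is a discrete subgroup of PSL(2,ℂ). -/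
set_option maxHeartbeats 1000000
set_option synthInstance.maxHeartbeats 200000

noncomputable section

open Matrix Filter Topology Set Pointwise

/-- The linear embedding `ℂ² → ℂ³`, `v ↦ (0, v 0, v 1)`. -/
def embL : (Fin 2 → ℂ) →ₗ[ℂ] (Fin 3 → ℂ) where
  toFun v := ![0, v 0, v 1]
  map_add' v w := by funext i; fin_cases i <;> simp
  map_smul' c v := by funext i; fin_cases i <;> simp

lemma embL_injective : Function.Injective embL := by
  intro v w h
  funext i
  fin_cases i
  · simpa [embL] using congrFun h 1
  · simpa [embL] using congrFun h 2

/-- The embedding of `ℙ¹ℂ` onto the line `{[0:z:w]}` of `ℙ²ℂ`, given by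
`[z:w] ↦ [0:z:w]`. -/
def embP1 : Proj 2 → Proj 3 := Projectivization.map embL embL_injective

/-- The limit set of a subgroup of `PSL(2,ℂ)` acting on `ℙ¹ℂ`: the set of cluster
points of the orbits. -/
def limitSetP1 (S : Subgroup (PSL 2)) : Set (Proj 2) :=
  {y : Proj 2 | ∃ z : Proj 2, AccPt y (Filter.principal (setOrbit (S : Set (PSL 2)) z))}
open scoped commutatorElement

namespace Statement12

open Matrix

/-! ### Topological group structure on `SL(n, ℂ)` and `PSL(n, ℂ)` -/

instance (n : ℕ) : T2Space (SL n) :=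
  inferInstanceAs (T2Space { A : Matrix (Fin n) (Fin n) ℂ // A.det = 1 })

instance (n : ℕ) : FirstCountableTopology (Matrix (Fin n) (Fin n) ℂ) :=
  inferInstanceAs (FirstCountableTopology (Fin n → Fin n → ℂ))

instance (n : ℕ) : FirstCountableTopology (SL n) := by
  constructor
  intro x
  erw [nhds_induced]
  exact Filter.comap.isCountablyGenerated _ _

instance (n : ℕ) : IsTopologicalGroup (SL n) where
  continuous_mul := by
    have h : Continuous fun p : SL n × SL n =>
        ((p.1 : Matrix (Fin n) (Fin n) ℂ) * (p.2 : Matrix (Fin n) (Fin n) ℂ)) :=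
      (continuous_subtype_val.comp continuous_fst).matrix_mul
        (continuous_subtype_val.comp continuous_snd)
    exact continuous_induced_rng.2 h
  continuous_inv := by
    apply continuous_induced_rng.2
    exact (continuous_subtype_val.matrix_adjugate).congr
      fun A => (Matrix.SpecialLinearGroup.coe_inv A).symm

lemma isClosed_center_SL (n : ℕ) :
    IsClosed ((Subgroup.center (SL n) : Set (SL n))) := by
  have h : (Subgroup.center (SL n) : Set (SL n)) = ⋂ g : SL n, {z : SL n | g * z = z * g} := by
    ext z
    simp only [Set.mem_iInter, Set.mem_setOf_eq, SetLike.mem_coe, Subgroup.mem_center_iff]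
  rw [h]
  exact isClosed_iInter fun g =>
    isClosed_eq (continuous_const.mul continuous_id) (continuous_id.mul continuous_const)

instance (n : ℕ) : T2Space (PSL n) := by
  apply IsTopologicalGroup.t2Space_iff_one_closed.mpr
  have h : ((QuotientGroup.mk : SL n → PSL n) ⁻¹' {1}) = (Subgroup.center (SL n) : Set (SL n)) := by
    ext g
    simp [QuotientGroup.eq_one_iff]
  rw [← (QuotientGroup.isQuotientMap_mk (Subgroup.center (SL n))).isClosed_preimage, h]
  exact isClosed_center_SL n

/-! ### The block embedding `SL(2,ℂ) → SL(3,ℂ)` -/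

/-- The block matrix `diag(1, C)`. -/
def bl (C : Matrix (Fin 2) (Fin 2) ℂ) : Matrix (Fin 3) (Fin 3) ℂ :=
  !![1, 0, 0; 0, C 0 0, C 0 1; 0, C 1 0, C 1 1]

lemma bl_det (C : Matrix (Fin 2) (Fin 2) ℂ) (h : C.det = 1) : (bl C).det = 1 := by
  rw [Matrix.det_fin_two] at h
  simp [bl, Matrix.det_fin_three]
  linear_combination h

lemma bl_mul (C D : Matrix (Fin 2) (Fin 2) ℂ) : bl C * bl D = bl (C * D) := by
  ext i j
  fin_cases i <;> fin_cases j <;>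
    simp [bl, Matrix.mul_apply, Fin.sum_univ_three, Fin.sum_univ_two,
      Matrix.vecHead, Matrix.vecTail]

lemma bl_one : bl 1 = 1 := by
  ext i j
  fin_cases i <;> fin_cases j <;>
    simp [bl, Matrix.one_apply, Matrix.vecHead, Matrix.vecTail]

/-- The embedding `SL(2,ℂ) → SL(3,ℂ)`, `C ↦ diag(1, C)`. -/
def ψ₀ : SL 2 →* SL 3 where
  toFun C := ⟨bl (C : Matrix (Fin 2) (Fin 2) ℂ), bl_det _ C.2⟩
  map_one' := Subtype.ext (by simpa using bl_one)
  map_mul' C D := Subtype.ext (by simp [← bl_mul]; rfl)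

lemma ψ₀_coe (C : SL 2) : ((ψ₀ C : SL 3) : Matrix (Fin 3) (Fin 3) ℂ)
    = bl (C : Matrix (Fin 2) (Fin 2) ℂ) := rfl

/-- The composite `SL(2,ℂ) → PSL(3,ℂ)`. -/
def ψ : SL 2 →* PSL 3 := (QuotientGroup.mk' (Subgroup.center (SL 3))).comp ψ₀

lemma ψ_continuous : Continuous ψ := by
  apply Continuous.comp continuous_quot_mk
  apply continuous_induced_rng.2
  apply continuous_matrix
  intro i j
  show Continuous fun C : SL 2 => bl (C : Matrix (Fin 2) (Fin 2) ℂ) i j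
  fin_cases i <;> fin_cases j <;>
    · simp only [bl, Matrix.cons_val', Matrix.cons_val_zero, Matrix.cons_val_one,
        Matrix.head_cons, Matrix.empty_val', Matrix.cons_val_fin_one, Matrix.head_fin_const,
        Matrix.vecHead, Matrix.vecTail]
      first
      | exact continuous_const
      | exact continuous_subtype_val.matrix_elem _ _
      | fun_prop

lemma ψ_eq_one {C : SL 2} (h : ψ C = 1) : C = 1 := by
  have h2 : ψ₀ C ∈ Subgroup.center (SL 3) := by
    rw [ψ] at h
    exact (QuotientGroup.eq_one_iff _).mp h
  obtain ⟨r, hr1, hr⟩ := Matrix.SpecialLinearGroup.mem_center_iff.mp h2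
  have hentry : ∀ i j, Matrix.scalar (Fin 3) r i j
      = bl (C : Matrix (Fin 2) (Fin 2) ℂ) i j := by
    intro i j
    rw [hr]
    rfl
  have h00 : r = 1 := by
    have := hentry 0 0
    simpa [Matrix.scalar_apply, bl, Matrix.diagonal_apply] using this
  apply Subtype.ext
  ext i j
  have hij := (hentry i.succ j.succ).symm
  rw [h00] at hij
  fin_cases i <;> fin_cases j <;>
    simpa [Matrix.scalar_apply, Matrix.diagonal_apply, bl, Matrix.one_apply,
      Matrix.vecHead, Matrix.vecTail] using hij

/-- The nontrivial central element `-1` of `SL(2,ℂ)`. -/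
def w : SL 2 := ⟨-1, by simp [Matrix.det_neg, Fintype.card_fin]⟩

lemma w_mem_center : w ∈ Subgroup.center (SL 2) := by
  apply Matrix.SpecialLinearGroup.mem_center_iff.mpr
  refine ⟨-1, by rw [Fintype.card_fin]; norm_num, ?_⟩
  rw [_root_.map_neg, _root_.map_one]
  rfl

lemma center2 (z : SL 2) (hz : z ∈ Subgroup.center (SL 2)) : z = 1 ∨ z = w := by
  obtain ⟨r, hr1, hr⟩ := Matrix.SpecialLinearGroup.mem_center_iff.mp hz
  have hr2 : r ^ 2 = 1 := by simpa using hr1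
  rcases sq_eq_one_iff.mp hr2 with h | h
  · left
    apply Subtype.ext
    rw [← hr, h, _root_.map_one]
    rfl
  · right
    apply Subtype.ext
    rw [← hr, h, _root_.map_neg, _root_.map_one]
    rfl

lemma mk_w_eq_one : (QuotientGroup.mk w : PSL 2) = 1 :=
  (QuotientGroup.eq_one_iff _).mpr w_mem_center

/-! ### Matrices commuting with a nonscalar 2×2 matrix commute with each other -/

lemma commutant_rep (A P : Matrix (Fin 2) (Fin 2) ℂ)
    (hA : ∀ α : ℂ, A ≠ α • (1 : Matrix (Fin 2) (Fin 2) ℂ))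
    (hP : P * A = A * P) :
    ∃ α β : ℂ, P = α • (1 : Matrix (Fin 2) (Fin 2) ℂ) + β • A := by
  have e : ∀ i j, (P * A) i j = (A * P) i j := fun i j => by rw [hP]
  have e00 := e 0 0
  have e01 := e 0 1
  have e10 := e 1 0
  have e11 := e 1 1
  simp only [Matrix.mul_apply, Fin.sum_univ_two] at e00 e01 e10 e11
  by_cases hb : A 0 1 ≠ 0
  · refine ⟨P 0 0 - (P 0 1 / A 0 1) * A 0 0, P 0 1 / A 0 1, ?_⟩
    ext i j
    fin_cases i <;> fin_cases j
    · norm_num [Matrix.add_apply, Matrix.smul_apply, Matrix.one_apply]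
    · norm_num [Matrix.add_apply, Matrix.smul_apply, Matrix.one_apply]
      field_simp
    · norm_num [Matrix.add_apply, Matrix.smul_apply, Matrix.one_apply]
      field_simp
      linear_combination -e00
    · norm_num [Matrix.add_apply, Matrix.smul_apply, Matrix.one_apply]
      field_simp
      linear_combination -e01
  · push_neg at hb
    by_cases hc : A 1 0 ≠ 0
    · refine ⟨P 0 0 - (P 1 0 / A 1 0) * A 0 0, P 1 0 / A 1 0, ?_⟩
      ext i j
      fin_cases i <;> fin_cases j
      · norm_num [Matrix.add_apply, Matrix.smul_apply, Matrix.one_apply]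
      · norm_num [Matrix.add_apply, Matrix.smul_apply, Matrix.one_apply]
        field_simp
        linear_combination -e11
      · norm_num [Matrix.add_apply, Matrix.smul_apply, Matrix.one_apply]
        field_simp
      · norm_num [Matrix.add_apply, Matrix.smul_apply, Matrix.one_apply]
        field_simp
        linear_combination e10
    · push_neg at hc
      have hd : A 0 0 ≠ A 1 1 := by
        intro hdiag
        apply hA (A 0 0)
        ext i j
        fin_cases i <;> fin_cases j <;>
          simp [Matrix.smul_apply, Matrix.one_apply, hb, hc, hdiag]
      have hd' : A 0 0 - A 1 1 ≠ 0 := sub_ne_zero.mpr hd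
      have hP01 : P 0 1 = 0 := by
        have h1 : P 0 1 * (A 1 1 - A 0 0) = 0 := by
          linear_combination e01 + (P 1 1 - P 0 0) * hb
        rcases mul_eq_zero.mp h1 with h | h
        · exact h
        · exact absurd (by linear_combination -h) hd'
      have hP10 : P 1 0 = 0 := by
        have h2 : P 1 0 * (A 0 0 - A 1 1) = 0 := by
          linear_combination e10 + (P 0 0 - P 1 1) * hc
        rcases mul_eq_zero.mp h2 with h | h
        · exact h
        · exact absurd h hd'
      refine ⟨P 0 0 - ((P 0 0 - P 1 1) / (A 0 0 - A 1 1)) * A 0 0,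
        (P 0 0 - P 1 1) / (A 0 0 - A 1 1), ?_⟩
      ext i j
      fin_cases i <;> fin_cases j
      · norm_num [Matrix.add_apply, Matrix.smul_apply, Matrix.one_apply]
      · norm_num [Matrix.add_apply, Matrix.smul_apply, Matrix.one_apply, hb, hP01]
      · norm_num [Matrix.add_apply, Matrix.smul_apply, Matrix.one_apply, hc, hP10]
      · norm_num [Matrix.add_apply, Matrix.smul_apply, Matrix.one_apply]
        field_simp
        ring

lemma commutant_comm (A M N : Matrix (Fin 2) (Fin 2) ℂ)
    (hA : ∀ α : ℂ, A ≠ α • (1 : Matrix (Fin 2) (Fin 2) ℂ))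
    (hM : M * A = A * M) (hN : N * A = A * N) : M * N = N * M := by
  obtain ⟨α, β, rfl⟩ := commutant_rep A M hA hM
  obtain ⟨γ, δ, rfl⟩ := commutant_rep A N hA hN
  simp only [Matrix.add_mul, Matrix.mul_add, Matrix.smul_mul, Matrix.mul_smul,
    Matrix.one_mul, Matrix.mul_one]
  module

/-! ### Group-theoretic commutator juggling -/

section GroupJuggle

variable {H : Type*} [Group H]

lemma central_move {z : H} (hz : ∀ h, z * h = h * z) (u v : H) :
    u * (z * v) = z * (u * v) := by
  rw [← mul_assoc, ← hz u, mul_assoc]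

lemma central_inv {z : H} (hz : ∀ h, z * h = h * z) : ∀ h, z⁻¹ * h = h * z⁻¹ := by
  intro h
  calc z⁻¹ * h = z⁻¹ * (h * z) * z⁻¹ := by group
  _ = z⁻¹ * (z * h) * z⁻¹ := by rw [← hz h]
  _ = h * z⁻¹ := by group

lemma conj_comm_of_central_conj {A X Y z₁ z₂ : H}
    (hz₁ : ∀ h, z₁ * h = h * z₁) (hz₂ : ∀ h, z₂ * h = h * z₂)
    (e₁ : X * A = z₁ * (A * X)) (e₂ : Y * A = z₂ * (A * Y)) :
    ⁅X, Y⁆ * A = A * ⁅X, Y⁆ := by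
  have hz₁' := central_inv hz₁
  have hz₂' := central_inv hz₂
  have e₁' : A * X⁻¹ = z₁ * (X⁻¹ * A) := by
    apply mul_left_cancel (a := X)
    calc X * (A * X⁻¹) = (X * A) * X⁻¹ := by group
    _ = (z₁ * (A * X)) * X⁻¹ := by rw [e₁]
    _ = z₁ * A := by group
    _ = X * (z₁ * (X⁻¹ * A)) := by rw [central_move hz₁ X (X⁻¹ * A)]; group
  have e₂' : A * Y⁻¹ = z₂ * (Y⁻¹ * A) := by
    apply mul_left_cancel (a := Y)
    calc Y * (A * Y⁻¹) = (Y * A) * Y⁻¹ := by group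
    _ = (z₂ * (A * Y)) * Y⁻¹ := by rw [e₂]
    _ = z₂ * A := by group
    _ = Y * (z₂ * (Y⁻¹ * A)) := by rw [central_move hz₂ Y (Y⁻¹ * A)]; group
  have i₁ : X⁻¹ * A = z₁⁻¹ * (A * X⁻¹) := by rw [e₁', central_move hz₁ z₁⁻¹]; group
  have i₂ : Y⁻¹ * A = z₂⁻¹ * (A * Y⁻¹) := by rw [e₂', central_move hz₂ z₂⁻¹]; group
  calc ⁅X, Y⁆ * A = X * Y * X⁻¹ * (Y⁻¹ * A) := by rw [commutatorElement_def]; group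
  _ = X * Y * X⁻¹ * (z₂⁻¹ * (A * Y⁻¹)) := by rw [i₂]
  _ = z₂⁻¹ * ((X * Y) * ((X⁻¹ * A) * Y⁻¹)) := by rw [central_move hz₂' (X * Y * X⁻¹) (A * Y⁻¹)]; group
  _ = z₂⁻¹ * ((X * Y) * ((z₁⁻¹ * (A * X⁻¹)) * Y⁻¹)) := by rw [i₁]
  _ = z₂⁻¹ * (z₁⁻¹ * (X * ((Y * A) * (X⁻¹ * Y⁻¹)))) := by
      rw [show (X * Y) * ((z₁⁻¹ * (A * X⁻¹)) * Y⁻¹) = (X * Y) * (z₁⁻¹ * (A * X⁻¹ * Y⁻¹)) from by group,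
        central_move hz₁' (X * Y) (A * X⁻¹ * Y⁻¹)]
      group
  _ = z₂⁻¹ * (z₁⁻¹ * (X * ((z₂ * (A * Y)) * (X⁻¹ * Y⁻¹)))) := by rw [e₂]
  _ = z₂⁻¹ * (z₁⁻¹ * (z₂ * ((X * A) * (Y * X⁻¹ * Y⁻¹)))) := by
      rw [show X * ((z₂ * (A * Y)) * (X⁻¹ * Y⁻¹)) = X * (z₂ * (A * Y * X⁻¹ * Y⁻¹)) from by group,
        central_move hz₂ X (A * Y * X⁻¹ * Y⁻¹)]
      group
  _ = z₂⁻¹ * (z₁⁻¹ * (z₂ * ((z₁ * (A * X)) * (Y * X⁻¹ * Y⁻¹)))) := by rw [e₁]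
  _ = z₂⁻¹ * (z₁⁻¹ * (z₂ * (z₁ * (A * (X * Y * X⁻¹ * Y⁻¹))))) := by
      rw [show (z₁ * (A * X)) * (Y * X⁻¹ * Y⁻¹) = z₁ * (A * (X * Y * X⁻¹ * Y⁻¹)) from by group]
  _ = z₂⁻¹ * (z₂ * (z₁⁻¹ * (z₁ * (A * (X * Y * X⁻¹ * Y⁻¹))))) := by
      rw [central_move hz₂ z₁⁻¹ (z₁ * (A * (X * Y * X⁻¹ * Y⁻¹)))]
  _ = A * ⁅X, Y⁆ := by rw [commutatorElement_def]; group

end GroupJuggle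

/-! ### A group in which double commutators vanish is solvable -/

lemma closure_pairwise_commute {H : Type*} [Group H] {S : Set H}
    (hS : ∀ a ∈ S, ∀ b ∈ S, Commute a b) :
    ∀ x ∈ Subgroup.closure S, ∀ y ∈ Subgroup.closure S, Commute x y := by
  have h1 : ∀ a ∈ S, ∀ y ∈ Subgroup.closure S, Commute a y := by
    intro a ha y hy
    induction hy using Subgroup.closure_induction with
    | mem b hb => exact hS a ha b hb
    | one => exact Commute.one_right a
    | mul p q hp hq ihp ihq => exact Commute.mul_right ihp ihq
    | inv p hp ih => exact Commute.inv_right ih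
  intro x hx y hy
  induction hx using Subgroup.closure_induction with
  | mem a ha => exact h1 a ha y hy
  | one => exact Commute.one_left y
  | mul p q hp hq ihp ihq => exact Commute.mul_left ihp ihq
  | inv p hp ih => exact Commute.inv_left ih

lemma isSolvable_of_double_commutator {H : Type*} [Group H]
    (hcomm : ∀ a b c d : H, ⁅⁅a, b⁆, ⁅c, d⁆⁆ = 1) : IsSolvable H := by
  refine ⟨⟨2, ?_⟩⟩
  rw [eq_bot_iff]
  have h1 : derivedSeries H 1 = Subgroup.closure (commutatorSet H) := by
    have : derivedSeries H 1 = commutator H := by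
      rw [derivedSeries_succ, derivedSeries_zero, commutator_def]
    rw [this, commutator_eq_closure]
  have h2 : derivedSeries H 2 = ⁅derivedSeries H 1, derivedSeries H 1⁆ := derivedSeries_succ H 1
  rw [h2, h1]
  rw [Subgroup.commutator_le]
  intro x hx y hy
  rw [Subgroup.mem_bot]
  have hS : ∀ a ∈ commutatorSet H, ∀ b ∈ commutatorSet H, Commute a b := by
    rintro a ⟨p, q, rfl⟩ b ⟨r, s, rfl⟩
    exact commutatorElement_eq_one_iff_commute.mp (hcomm p q r s)
  exact commutatorElement_eq_one_iff_commute.mpr (closure_pairwise_commute hS x hx y hy)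

/-! ### The centralizer lemma in `PSL(2,ℂ)` -/

lemma scalar_eq_smul_one (α : ℂ) :
    Matrix.scalar (Fin 2) α = α • (1 : Matrix (Fin 2) (Fin 2) ℂ) := by
  ext i j
  by_cases h : i = j <;>
    simp [Matrix.scalar_apply, Matrix.diagonal_apply, Matrix.one_apply, h]

lemma centralizer_double_commutator (g : PSL 2) (hg : g ≠ 1) (a b c d : PSL 2)
    (ha : Commute g a) (hb : Commute g b) (hc : Commute g c) (hd : Commute g d) :
    ⁅⁅a, b⁆, ⁅c, d⁆⁆ = 1 := by
  obtain ⟨A, hA⟩ := QuotientGroup.mk_surjective g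
  have hAnc : ∀ α : ℂ, (A : Matrix (Fin 2) (Fin 2) ℂ) ≠ α • (1 : Matrix (Fin 2) (Fin 2) ℂ) := by
    intro α hα
    apply hg
    rw [← hA, QuotientGroup.eq_one_iff]
    apply Matrix.SpecialLinearGroup.mem_center_iff.mpr
    refine ⟨α, ?_, ?_⟩
    · have hdet := A.2
      rw [hα] at hdet
      simpa [Matrix.det_smul, Fintype.card_fin] using hdet
    · rw [scalar_eq_smul_one, ← hα]
  have lift : ∀ p : PSL 2, Commute g p → ∃ (X z : SL 2), QuotientGroup.mk X = p ∧
      (∀ h : SL 2, z * h = h * z) ∧ X * A = z * (A * X) := by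
    intro p hp
    obtain ⟨X, hX⟩ := QuotientGroup.mk_surjective p
    have hzc : X * A * X⁻¹ * A⁻¹ ∈ Subgroup.center (SL 2) := by
      rw [← QuotientGroup.eq_one_iff]
      have : (QuotientGroup.mk (X * A * X⁻¹ * A⁻¹) : PSL 2)
          = ⁅(QuotientGroup.mk X : PSL 2), QuotientGroup.mk A⁆ := by
        rw [show X * A * X⁻¹ * A⁻¹ = ⁅X, A⁆ from rfl]
        exact map_commutatorElement (QuotientGroup.mk' (Subgroup.center (SL 2))) X A
      rw [this, hX, hA]
      exact commutatorElement_eq_one_iff_commute.mpr hp.symm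
    refine ⟨X, X * A * X⁻¹ * A⁻¹, hX, ?_, by group⟩
    intro h
    exact (Subgroup.mem_center_iff.mp hzc h).symm
  obtain ⟨Xa, za, hXa, hza, ea⟩ := lift a ha
  obtain ⟨Xb, zb, hXb, hzb, eb⟩ := lift b hb
  obtain ⟨Xc, zc, hXc, hzc, ec⟩ := lift c hc
  obtain ⟨Xd, zd, hXd, hzd, ed⟩ := lift d hd
  have hM : ⁅Xa, Xb⁆ * A = A * ⁅Xa, Xb⁆ := conj_comm_of_central_conj hza hzb ea eb
  have hN : ⁅Xc, Xd⁆ * A = A * ⁅Xc, Xd⁆ := conj_comm_of_central_conj hzc hzd ec ed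
  have hMA : ((⁅Xa, Xb⁆ : SL 2) : Matrix (Fin 2) (Fin 2) ℂ) * (A : Matrix (Fin 2) (Fin 2) ℂ)
      = (A : Matrix (Fin 2) (Fin 2) ℂ) * ((⁅Xa, Xb⁆ : SL 2) : Matrix (Fin 2) (Fin 2) ℂ) := by
    have := congrArg (Subtype.val) hM
    simpa using this
  have hNA : ((⁅Xc, Xd⁆ : SL 2) : Matrix (Fin 2) (Fin 2) ℂ) * (A : Matrix (Fin 2) (Fin 2) ℂ)
      = (A : Matrix (Fin 2) (Fin 2) ℂ) * ((⁅Xc, Xd⁆ : SL 2) : Matrix (Fin 2) (Fin 2) ℂ) := by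
    have := congrArg (Subtype.val) hN
    simpa using this
  have hMN : ⁅Xa, Xb⁆ * ⁅Xc, Xd⁆ = ⁅Xc, Xd⁆ * ⁅Xa, Xb⁆ := by
    apply Subtype.ext
    have := commutant_comm (A : Matrix (Fin 2) (Fin 2) ℂ) _ _ hAnc hMA hNA
    simpa using this
  have hab : ⁅a, b⁆ = QuotientGroup.mk ⁅Xa, Xb⁆ := by
    rw [show (QuotientGroup.mk ⁅Xa, Xb⁆ : PSL 2)
      = ⁅(QuotientGroup.mk Xa : PSL 2), QuotientGroup.mk Xb⁆ from
      map_commutatorElement (QuotientGroup.mk' (Subgroup.center (SL 2))) Xa Xb, hXa, hXb]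
  have hcd : ⁅c, d⁆ = QuotientGroup.mk ⁅Xc, Xd⁆ := by
    rw [show (QuotientGroup.mk ⁅Xc, Xd⁆ : PSL 2)
      = ⁅(QuotientGroup.mk Xc : PSL 2), QuotientGroup.mk Xd⁆ from
      map_commutatorElement (QuotientGroup.mk' (Subgroup.center (SL 2))) Xc Xd, hXc, hXd]
  rw [hab, hcd]
  rw [show ⁅(QuotientGroup.mk ⁅Xa, Xb⁆ : PSL 2), (QuotientGroup.mk ⁅Xc, Xd⁆ : PSL 2)⁆
    = QuotientGroup.mk ⁅⁅Xa, Xb⁆, ⁅Xc, Xd⁆⁆ from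
    (map_commutatorElement (QuotientGroup.mk' (Subgroup.center (SL 2))) _ _).symm]
  rw [commutatorElement_eq_one_iff_commute.mpr hMN]
  rfl

/-! ### Structure of elements of the stabilizer group -/

/-- The structural property: `g` acts as `diag(a, μ D)`. -/
def Pst (g : SL 3) (D : SL 2) (a μ : ℂ) : Prop :=
  a ≠ 0 ∧ μ ≠ 0 ∧
    Matrix.SpecialLinearGroup.toLin' g (Pi.single 0 1) = a • (Pi.single 0 1 : Fin 3 → ℂ) ∧
    ∀ v : Fin 2 → ℂ, Matrix.SpecialLinearGroup.toLin' g (embL v)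
      = μ • embL (Matrix.SpecialLinearGroup.toLin' D v)

lemma toLin'_mul_apply {n : ℕ} (g h : SL n) (v : Fin n → ℂ) :
    Matrix.SpecialLinearGroup.toLin' (g * h) v
      = Matrix.SpecialLinearGroup.toLin' g (Matrix.SpecialLinearGroup.toLin' h v) := by
  rw [_root_.map_mul]
  rfl

lemma toLin'_cancel {n : ℕ} (g : SL n) (v : Fin n → ℂ) :
    Matrix.SpecialLinearGroup.toLin' g⁻¹ (Matrix.SpecialLinearGroup.toLin' g v) = v := by
  rw [← toLin'_mul_apply, inv_mul_cancel, _root_.map_one]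
  rfl

lemma Pst.mul {g h : SL 3} {D E : SL 2} {a b μ ν : ℂ}
    (hg : Pst g D a μ) (hh : Pst h E b ν) : Pst (g * h) (D * E) (a * b) (μ * ν) := by
  obtain ⟨ha, hμ, h1, h2⟩ := hg
  obtain ⟨hb, hν, h3, h4⟩ := hh
  refine ⟨mul_ne_zero ha hb, mul_ne_zero hμ hν, ?_, ?_⟩
  · rw [toLin'_mul_apply, h3, _root_.map_smul, h1, smul_smul, mul_comm a b]
  · intro v
    rw [toLin'_mul_apply, h4, _root_.map_smul, h2, toLin'_mul_apply, smul_smul,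
      mul_comm μ ν]

lemma Pst.inv {g : SL 3} {D : SL 2} {a μ : ℂ} (hg : Pst g D a μ) : Pst g⁻¹ D⁻¹ a⁻¹ μ⁻¹ := by
  obtain ⟨ha, hμ, h1, h2⟩ := hg
  refine ⟨inv_ne_zero ha, inv_ne_zero hμ, ?_, ?_⟩
  · have key : Matrix.SpecialLinearGroup.toLin' g (a⁻¹ • (Pi.single 0 1 : Fin 3 → ℂ))
        = Pi.single 0 1 := by
      rw [_root_.map_smul, h1, smul_smul, inv_mul_cancel₀ ha, one_smul]
    calc Matrix.SpecialLinearGroup.toLin' g⁻¹ (Pi.single 0 1)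
        = Matrix.SpecialLinearGroup.toLin' g⁻¹
            (Matrix.SpecialLinearGroup.toLin' g (a⁻¹ • (Pi.single 0 1 : Fin 3 → ℂ))) := by
          rw [key]
    _ = a⁻¹ • (Pi.single 0 1 : Fin 3 → ℂ) := toLin'_cancel g _
  · intro v
    have key : Matrix.SpecialLinearGroup.toLin' g
        (μ⁻¹ • embL (Matrix.SpecialLinearGroup.toLin' D⁻¹ v)) = embL v := by
      rw [_root_.map_smul, h2, smul_smul, inv_mul_cancel₀ hμ, one_smul, ← toLin'_mul_apply,
        mul_inv_cancel, _root_.map_one]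
      rfl
    calc Matrix.SpecialLinearGroup.toLin' g⁻¹ (embL v)
        = Matrix.SpecialLinearGroup.toLin' g⁻¹ (Matrix.SpecialLinearGroup.toLin' g
            (μ⁻¹ • embL (Matrix.SpecialLinearGroup.toLin' D⁻¹ v))) := by rw [key]
    _ = μ⁻¹ • embL (Matrix.SpecialLinearGroup.toLin' D⁻¹ v) := toLin'_cancel g _

lemma embL_single_zero : embL (Pi.single 0 1) = (Pi.single 1 1 : Fin 3 → ℂ) := by
  funext l
  fin_cases l <;> simp [embL, Pi.single_apply]

lemma embL_single_one : embL (Pi.single 1 1) = (Pi.single 2 1 : Fin 3 → ℂ) := by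
  funext l
  fin_cases l <;> simp [embL, Pi.single_apply]

lemma vec_decomp (v : Fin 3 → ℂ) :
    v = v 0 • (Pi.single 0 1 : Fin 3 → ℂ) + embL ![v 1, v 2] := by
  funext l
  fin_cases l <;>
    simp [embL, Pi.single_apply, Matrix.vecHead, Matrix.vecTail]

lemma Pst_psi0 (C : SL 2) : Pst (ψ₀ C) C 1 1 := by
  refine ⟨one_ne_zero, one_ne_zero, ?_, ?_⟩
  · rw [Matrix.SpecialLinearGroup.toLin'_apply, Matrix.toLin'_apply, ψ₀_coe, one_smul]
    funext l
    fin_cases l <;>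
      simp [bl, Matrix.mulVec, dotProduct, Fin.sum_univ_three, Pi.single_apply,
        Matrix.vecHead, Matrix.vecTail]
  · intro v
    rw [Matrix.SpecialLinearGroup.toLin'_apply, Matrix.toLin'_apply, ψ₀_coe, one_smul,
      Matrix.SpecialLinearGroup.toLin'_apply, Matrix.toLin'_apply]
    funext l
    fin_cases l <;>
      simp [bl, embL, Matrix.mulVec, dotProduct, Fin.sum_univ_three, Fin.sum_univ_two,
        Matrix.vecHead, Matrix.vecTail]

lemma Pst.eq_psi0 {k : SL 3} {C : SL 2} (h : Pst k C 1 1) : k = ψ₀ C := by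
  obtain ⟨-, -, h1, h2⟩ := h
  obtain ⟨-, -, g1, g2⟩ := Pst_psi0 C
  have hpt : ∀ v, Matrix.SpecialLinearGroup.toLin' k v
      = Matrix.SpecialLinearGroup.toLin' (ψ₀ C) v := by
    intro v
    conv_lhs => rw [vec_decomp v]
    conv_rhs => rw [vec_decomp v]
    rw [_root_.map_add, _root_.map_add, _root_.map_smul, _root_.map_smul, h1, g1, h2, g2]
  apply Subtype.ext
  apply Matrix.toLin'.injective
  apply LinearMap.ext
  intro v
  rw [← Matrix.SpecialLinearGroup.toLin'_apply, ← Matrix.SpecialLinearGroup.toLin'_apply]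
  exact hpt v

lemma mk_smul {n : ℕ} (g : SL n) (x : Proj n) :
    (QuotientGroup.mk g : PSL n) • x = PSLAct.actP g x := rfl

lemma single_zero_ne_zero {n : ℕ} [NeZero n] : (Pi.single 0 1 : Fin n → ℂ) ≠ 0 :=
  fun h => one_ne_zero (α := ℂ) (by simpa using congrFun h 0)

lemma stdPt_eq {n : ℕ} [NeZero n] :
    stdPt (0 : Fin n) = Projectivization.mk ℂ (Pi.single 0 1) single_zero_ne_zero := rfl

lemma exists_Pst (γP : PSL 3) (φ : PSL 2)
    (hfixγ : γP • stdPt (0 : Fin 3) = stdPt (0 : Fin 3))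
    (hΦγ : ∀ x : Proj 2, γP • embP1 x = embP1 (φ • x)) :
    ∃ (g : SL 3) (D : SL 2) (a μ : ℂ),
      QuotientGroup.mk g = γP ∧ QuotientGroup.mk D = φ ∧ Pst g D a μ := by
  obtain ⟨g, hg⟩ := QuotientGroup.mk_surjective γP
  obtain ⟨D, hD⟩ := QuotientGroup.mk_surjective φ
  have hfix' : PSLAct.actP g (stdPt (0 : Fin 3)) = stdPt (0 : Fin 3) := by
    rw [← mk_smul, hg]
    exact hfixγ
  rw [stdPt_eq, PSLAct.actP_mk, Projectivization.mk_eq_mk_iff'] at hfix'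
  obtain ⟨a, ha⟩ := hfix'
  have ha0 : a ≠ 0 := by
    intro h0
    rw [h0, zero_smul] at ha
    exact ((Matrix.SpecialLinearGroup.toLin' g).map_ne_zero_iff.mpr
      (single_zero_ne_zero (n := 3))) ha.symm
  have hsc : ∀ (v : Fin 2 → ℂ), v ≠ 0 → ∃ c : ℂ,
      c • embL (Matrix.SpecialLinearGroup.toLin' D v)
        = Matrix.SpecialLinearGroup.toLin' g (embL v) := by
    intro v hv
    have h := hΦγ (Projectivization.mk ℂ v hv)
    rw [← hg, ← hD, mk_smul, mk_smul] at h
    simp only [embP1] at h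
    rw [Projectivization.map_mk, PSLAct.actP_mk, PSLAct.actP_mk, Projectivization.map_mk] at h
    exact (Projectivization.mk_eq_mk_iff' _ _ _ _ _).mp h
  have hs0 : (Pi.single 0 1 : Fin 2 → ℂ) ≠ 0 := single_zero_ne_zero (n := 2)
  have hs1 : (Pi.single 1 1 : Fin 2 → ℂ) ≠ 0 := by
    intro h
    exact one_ne_zero (α := ℂ) (by simpa using congrFun h 1)
  have hs01 : (Pi.single 0 1 + Pi.single 1 1 : Fin 2 → ℂ) ≠ 0 := by
    intro h
    have := congrFun h 0
    simp [Pi.single_apply] at this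
  obtain ⟨c₀, hc₀⟩ := hsc (Pi.single 0 1) hs0
  obtain ⟨c₁, hc₁⟩ := hsc (Pi.single 1 1) hs1
  obtain ⟨c₂, hc₂⟩ := hsc (Pi.single 0 1 + Pi.single 1 1) hs01
  set u : Fin 3 → ℂ := embL (Matrix.SpecialLinearGroup.toLin' D (Pi.single 0 1)) with hu
  set u' : Fin 3 → ℂ := embL (Matrix.SpecialLinearGroup.toLin' D (Pi.single 1 1)) with hu'
  have h3 : c₂ • u + c₂ • u' = c₀ • u + c₁ • u' := by
    have hDadd : embL (Matrix.SpecialLinearGroup.toLin' D (Pi.single 0 1 + Pi.single 1 1))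
        = u + u' := by rw [_root_.map_add, _root_.map_add]
    have hgadd : Matrix.SpecialLinearGroup.toLin' g (embL (Pi.single 0 1 + Pi.single 1 1))
        = Matrix.SpecialLinearGroup.toLin' g (embL (Pi.single 0 1))
          + Matrix.SpecialLinearGroup.toLin' g (embL (Pi.single 1 1)) := by
      rw [_root_.map_add, _root_.map_add]
    have h5 := hc₂
    rw [hDadd, hgadd, ← hc₀, ← hc₁, smul_add] at h5
    exact h5
  have hz : ((c₂ - c₀) • (Pi.single 0 1 : Fin 2 → ℂ) + (c₂ - c₁) • (Pi.single 1 1 : Fin 2 → ℂ))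
      = 0 := by
    have hdiff : embL (Matrix.SpecialLinearGroup.toLin' D
        ((c₂ - c₀) • (Pi.single 0 1 : Fin 2 → ℂ) + (c₂ - c₁) • (Pi.single 1 1 : Fin 2 → ℂ))) = 0 := by
      rw [_root_.map_add, _root_.map_smul, _root_.map_smul, _root_.map_add,
        _root_.map_smul, _root_.map_smul]
      have expand : (c₂ - c₀) • u + (c₂ - c₁) • u' = (c₂ • u + c₂ • u') - (c₀ • u + c₁ • u') := by
        module
      rw [← hu, ← hu', expand, h3, sub_self]
    have h4 : Matrix.SpecialLinearGroup.toLin' D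
        ((c₂ - c₀) • (Pi.single 0 1 : Fin 2 → ℂ) + (c₂ - c₁) • (Pi.single 1 1 : Fin 2 → ℂ)) = 0 :=
      embL_injective (by rw [hdiff, _root_.map_zero])
    exact ((Matrix.SpecialLinearGroup.toLin' D).map_eq_zero_iff).mp h4
  have h20 : c₂ = c₀ := by
    have h := congrFun hz 0
    have h' : c₂ - c₀ = 0 := by simpa [Pi.single_apply] using h
    exact sub_eq_zero.mp h'
  have h21 : c₂ = c₁ := by
    have h := congrFun hz 1
    have h' : c₂ - c₁ = 0 := by simpa [Pi.single_apply] using h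
    exact sub_eq_zero.mp h'
  have hc00 : c₀ ≠ 0 := by
    intro h0
    rw [h0, zero_smul] at hc₀
    have hembne : embL (Pi.single 0 1 : Fin 2 → ℂ) ≠ 0 := by
      intro h
      exact hs0 (embL_injective (by rw [h, _root_.map_zero]))
    exact ((Matrix.SpecialLinearGroup.toLin' g).map_ne_zero_iff.mpr hembne) hc₀.symm
  refine ⟨g, D, a, c₀, hg, hD, ha0, hc00, ha.symm, ?_⟩
  intro v
  have hv : v = v 0 • (Pi.single 0 1 : Fin 2 → ℂ) + v 1 • (Pi.single 1 1 : Fin 2 → ℂ) := by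
    funext i
    fin_cases i <;> simp [Pi.single_apply]
  have hlhs : Matrix.SpecialLinearGroup.toLin' g (embL v)
      = v 0 • (c₀ • u) + v 1 • (c₁ • u') := by
    conv_lhs => rw [hv]
    rw [_root_.map_add, _root_.map_smul, _root_.map_smul, _root_.map_add,
      _root_.map_smul, _root_.map_smul, ← hc₀, ← hc₁]
  have hrhs : embL (Matrix.SpecialLinearGroup.toLin' D v) = v 0 • u + v 1 • u' := by
    conv_lhs => rw [hv]
    rw [_root_.map_add, _root_.map_smul, _root_.map_smul, _root_.map_add,
      _root_.map_smul, _root_.map_smul]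
  rw [hlhs, hrhs, show c₁ = c₀ from h21.symm.trans h20]
  module

lemma claimC (Γ : Subgroup (PSL 3))
    (hfix : ∀ γ ∈ Γ, γ • stdPt (0 : Fin 3) = stdPt (0 : Fin 3))
    (Φ : Γ →* PSL 2)
    (hΦ : ∀ (γ : Γ) (x : Proj 2), (γ : PSL 3) • embP1 x = embP1 (Φ γ • x))
    (γ δ : Γ) :
    ∃ C : SL 2, QuotientGroup.mk C = Φ ⁅γ, δ⁆ ∧ ((⁅γ, δ⁆ : Γ) : PSL 3) = ψ C := by
  obtain ⟨g, D, a, μ, hg, hD, hPg⟩ := exists_Pst (γ : PSL 3) (Φ γ) (hfix _ γ.2) (hΦ γ)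
  obtain ⟨h, E, b, ν, hh, hE, hPh⟩ := exists_Pst (δ : PSL 3) (Φ δ) (hfix _ δ.2) (hΦ δ)
  refine ⟨⁅D, E⁆, ?_, ?_⟩
  · rw [_root_.map_commutatorElement Φ γ δ, ← hD, ← hE]
    exact map_commutatorElement (QuotientGroup.mk' (Subgroup.center (SL 2))) D E
  · have hPcomm : Pst ⁅g, h⁆ ⁅D, E⁆ (a * b * a⁻¹ * b⁻¹) (μ * ν * μ⁻¹ * ν⁻¹) := by
      rw [commutatorElement_def, commutatorElement_def]
      exact ((hPg.mul hPh).mul hPg.inv).mul hPh.inv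
    have ha1 : a * b * a⁻¹ * b⁻¹ = 1 := by
      have h1 : a * b * a⁻¹ * b⁻¹ = (a * a⁻¹) * (b * b⁻¹) := by ring
      rw [h1, mul_inv_cancel₀ hPg.1, mul_inv_cancel₀ hPh.1, one_mul]
    have hμ1 : μ * ν * μ⁻¹ * ν⁻¹ = 1 := by
      have h1 : μ * ν * μ⁻¹ * ν⁻¹ = (μ * μ⁻¹) * (ν * ν⁻¹) := by ring
      rw [h1, mul_inv_cancel₀ hPg.2.1, mul_inv_cancel₀ hPh.2.1, one_mul]
    rw [ha1, hμ1] at hPcomm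
    have hk : ⁅g, h⁆ = ψ₀ ⁅D, E⁆ := hPcomm.eq_psi0
    have hcoe : ((⁅γ, δ⁆ : Γ) : PSL 3) = ⁅(γ : PSL 3), (δ : PSL 3)⁆ := by
      simp [commutatorElement_def]
    rw [hcoe, ← hg, ← hh,
      show ⁅(QuotientGroup.mk g : PSL 3), (QuotientGroup.mk h : PSL 3)⁆
        = QuotientGroup.mk ⁅g, h⁆
        from (map_commutatorElement (QuotientGroup.mk' (Subgroup.center (SL 3))) g h).symm,
      hk]
    rfl

lemma lemV (Γ : Subgroup (PSL 3)) (hdisc : DiscreteTopology Γ)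
    (hfix : ∀ γ ∈ Γ, γ • stdPt (0 : Fin 3) = stdPt (0 : Fin 3))
    (Φ : Γ →* PSL 2)
    (hΦ : ∀ (γ : Γ) (x : Proj 2), (γ : PSL 3) • embP1 x = embP1 (Φ γ • x)) :
    ∃ V ∈ nhds (1 : PSL 2), ∀ x y : PSL 2, x ∈ Φ.range → y ∈ Φ.range →
      ⁅x, y⁆ ∈ V → ⁅x, y⁆ = 1 := by
  haveI := hdisc
  have iso : ∀ p : PSL 3, ∃ U ∈ nhds p, ∀ q ∈ (Γ : Set (PSL 3)), q ∈ U → q = p := by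
    intro p
    by_cases hp : p ∈ (Γ : Set (PSL 3))
    · obtain ⟨U, hU, hUs⟩ := nhds_inter_eq_singleton_of_mem_discrete (SetLike.isDiscrete_iff_discreteTopology.mpr hdisc) hp
      refine ⟨U, hU, fun q hq hqU => ?_⟩
      have hmem : q ∈ U ∩ (Γ : Set (PSL 3)) := ⟨hqU, hq⟩
      rw [hUs] at hmem
      exact hmem
    · refine ⟨(Γ : Set (PSL 3))ᶜ, ?_, fun q hq hqU => absurd hq hqU⟩
      exact (Subgroup.isClosed_of_discrete (H := Γ)).isOpen_compl.mem_nhds hp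
  obtain ⟨U₁, hU₁n, hU₁⟩ := iso 1
  obtain ⟨U₂, hU₂n, hU₂⟩ := iso (ψ w)
  have hW₁ : ψ ⁻¹' U₁ ∈ nhds (1 : SL 2) := by
    apply ψ_continuous.continuousAt.preimage_mem_nhds
    rw [_root_.map_one]
    exact hU₁n
  have hW₂ : (fun C : SL 2 => ψ (w * C)) ⁻¹' U₂ ∈ nhds (1 : SL 2) := by
    apply (ψ_continuous.comp (continuous_const.mul continuous_id)).continuousAt.preimage_mem_nhds
    simpa using hU₂n
  have hWn : ψ ⁻¹' U₁ ∩ (fun C : SL 2 => ψ (w * C)) ⁻¹' U₂ ∈ nhds (1 : SL 2) :=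
    Filter.inter_mem hW₁ hW₂
  refine ⟨(QuotientGroup.mk : SL 2 → PSL 2) ''
    (ψ ⁻¹' U₁ ∩ (fun C : SL 2 => ψ (w * C)) ⁻¹' U₂), ?_, ?_⟩
  · have himg := (QuotientGroup.isOpenMap_coe
      (N := Subgroup.center (SL 2))).image_mem_nhds hWn
    simpa using himg
  · rintro x y ⟨γ, rfl⟩ ⟨δ, rfl⟩ hmem
    obtain ⟨C₀, hC₀Φ, hC₀ψ⟩ := claimC Γ hfix Φ hΦ γ δ
    have hcomm : ⁅Φ γ, Φ δ⁆ = Φ ⁅γ, δ⁆ := (map_commutatorElement Φ γ δ).symm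
    rw [hcomm] at hmem ⊢
    obtain ⟨C₁, hC₁W, hC₁⟩ := hmem
    have heq : (QuotientGroup.mk C₁ : PSL 2) = QuotientGroup.mk C₀ := by rw [hC₁, hC₀Φ]
    have hz : C₁⁻¹ * C₀ ∈ Subgroup.center (SL 2) := QuotientGroup.eq.mp heq
    have hΓmem : ψ C₀ ∈ (Γ : Set (PSL 3)) := by
      rw [← hC₀ψ]
      exact (⁅γ, δ⁆ : Γ).2
    rcases center2 _ hz with h | h
    · have hCC : C₁ = C₀ := inv_mul_eq_one.mp h
      have hψ1 : ψ C₀ = 1 := hU₁ _ hΓmem (by rw [← hCC]; exact hC₁W.1)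
      rw [← hC₀Φ, ψ_eq_one hψ1]
      rfl
    · have hCC : C₀ = C₁ * w := by rw [← h]; group
      have hΓU₂ : ψ C₀ ∈ U₂ := by
        have hswap : C₁ * w = w * C₁ := Subgroup.mem_center_iff.mp w_mem_center C₁
        rw [hCC, hswap]
        exact hC₁W.2
      have hψw : ψ C₀ = ψ w := hU₂ _ hΓmem hΓU₂
      have hwC : w⁻¹ * C₀ = 1 := by
        apply ψ_eq_one
        rw [_root_.map_mul, _root_.map_inv, hψw, inv_mul_cancel]
      have hC0 : C₀ = w := by
        have := inv_mul_eq_one.mp hwC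
        exact this.symm
      rw [← hC₀Φ, hC0]
      exact mk_w_eq_one

end Statement12


/-- Suppose a discrete subgroup `Γ` of `PSL(3,ℂ)` fixes the point
`[e₁]`, leaves invariant the line `ℓ = {[0:z:w]}`, and the maximal number of lines in
general position in its Kulkarni limit set is three.  If the control group, i.e. the
image of the restriction homomorphism `Γ → PSL(2,ℂ)` on `ℓ ≅ ℙ¹ℂ`, is not virtually
solvable, then it is discrete. -/
theorem control_group_discrete (Γ : Subgroup (PSL 3)) (hdisc : DiscreteTopology Γ)
    (hfix : ∀ γ ∈ Γ, γ • stdPt (0 : Fin 3) = stdPt (0 : Fin 3))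
    (hline : ∀ γ ∈ Γ, γ • Set.range embP1 = Set.range embP1)
    (hmax : maxGenPos (Γ : Set (PSL 3)) 3)
    (Φ : Γ →* PSL 2)
    (hΦ : ∀ (γ : Γ) (x : Proj 2), (γ : PSL 3) • embP1 x = embP1 (Φ γ • x))
    (hns : ¬ VirtuallySolvable Φ.range) :
    DiscreteTopology Φ.range := by
  haveI := hdisc
  by_cases hiso : ∃ V ∈ nhds (1 : PSL 2), ∀ x ∈ Φ.range, x ∈ V → x = 1
  · -- isolated identity: the range is discrete
    obtain ⟨V, hVn, hV⟩ := hiso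
    obtain ⟨O, hOV, hOopen, hO1⟩ := mem_nhds_iff.mp hVn
    apply discreteTopology_iff_isOpen_singleton.mpr
    intro x
    have hxeq : ({x} : Set Φ.range)
        = (fun y : Φ.range => ((x : PSL 2))⁻¹ * (y : PSL 2)) ⁻¹' O := by
      ext y
      simp only [Set.mem_preimage, Set.mem_singleton_iff]
      constructor
      · rintro rfl
        simpa using hO1
      · intro hy
        have hmem : ((x : PSL 2))⁻¹ * (y : PSL 2) ∈ Φ.range :=
          Φ.range.mul_mem (Φ.range.inv_mem x.2) y.2
        have h1 := hV _ hmem (hOV hy)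
        exact (Subtype.ext (inv_mul_eq_one.mp h1)).symm
    rw [hxeq]
    exact hOopen.preimage (continuous_const.mul continuous_subtype_val)
  · -- non-discrete case: the range would be solvable, contradiction
    exfalso
    apply hns
    push_neg at hiso
    obtain ⟨V, hVn, hV⟩ := Statement12.lemV Γ hdisc hfix Φ hΦ
    haveI : (nhds (1 : PSL 2)).IsCountablyGenerated := by infer_instance
    obtain ⟨B, hB⟩ := Filter.exists_antitone_basis (nhds (1 : PSL 2))
    have hBmem : ∀ n : ℕ, B n ∈ nhds (1 : PSL 2) := fun n => hB.1.mem_of_mem trivial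
    choose x hxR hxB hx1 using fun n : ℕ => hiso (B n) (hBmem n)
    have hxt : Filter.Tendsto x Filter.atTop (nhds (1 : PSL 2)) := hB.tendsto hxB
    have hcomm : ∀ h ∈ Φ.range, ∀ᶠ n in Filter.atTop, Commute (x n) h := by
      intro h hh
      have hcont : Continuous fun y : PSL 2 => y * h * y⁻¹ * h⁻¹ :=
        ((continuous_id.mul continuous_const).mul continuous_inv).mul continuous_const
      have ht : Filter.Tendsto (fun n => ⁅x n, h⁆) Filter.atTop
          (nhds ((1 : PSL 2) * h * 1⁻¹ * h⁻¹)) := (hcont.tendsto 1).comp hxt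
      have h1 : (1 : PSL 2) * h * 1⁻¹ * h⁻¹ = 1 := by group
      rw [h1] at ht
      have hev : ∀ᶠ n in Filter.atTop, ⁅x n, h⁆ ∈ V := Filter.le_def.mp ht V hVn
      filter_upwards [hev] with n hn
      exact commutatorElement_eq_one_iff_commute.mp (hV _ _ (hxR n) hh hn)
    have hkey : ∀ a b c d : Φ.range, ⁅⁅a, b⁆, ⁅c, d⁆⁆ = 1 := by
      intro a b c d
      obtain ⟨n, hna, hnb, hnc, hnd⟩ :=
        ((hcomm a a.2).and ((hcomm b b.2).and ((hcomm c c.2).and (hcomm d d.2)))).exists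
      have hid : ⁅⁅(a : PSL 2), (b : PSL 2)⁆, ⁅(c : PSL 2), (d : PSL 2)⁆⁆ = 1 :=
        Statement12.centralizer_double_commutator (x n) (hx1 n) _ _ _ _ hna hnb hnc hnd
      have hval : ((⁅⁅a, b⁆, ⁅c, d⁆⁆ : Φ.range) : PSL 2)
          = ⁅⁅(a : PSL 2), (b : PSL 2)⁆, ⁅(c : PSL 2), (d : PSL 2)⁆⁆ := by
        simp [commutatorElement_def]
      apply Subtype.ext
      rw [hval, hid]
      rfl
    haveI : IsSolvable Φ.range := Statement12.isSolvable_of_double_commutator hkey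
    exact ⟨⊤, inferInstance, by haveI : Group.IsSolvable Φ.range := this; exact (inferInstance : Group.IsSolvable (⊤ : Subgroup Φ.range))⟩
end
end
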